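/- The ring H*_T(𝒜_n) is generated as a ring by the 2n elements τ_1,…,τ_n, t_1,…,t_n. -/

import Mathlib

open MvPolynomial

/-- `R = ℤ[t_1,…,t_n]`. -/
abbrev Rn (n : ℕ) : Type := MvPolynomial (Fin n) ℤ

/-- Membership in the graph cohomology `H^*_T(𝒜_n)`: for every vertex `w` and every edge
`{w, w·(i,j)}`, the difference `h(w) - h(w·(i,j))` is divisible by `t_{w(i)} - t_{w(j)}`. -/
def condA (n : ℕ) (h : Equiv.Perm (Fin n) → Rn n) : Prop :=
  ∀ (w : Equiv.Perm (Fin n)) (i j : Fin n), i ≠ j →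
    (X (w i) - X (w j) : Rn n) ∣ h w - h (w * Equiv.swap i j)

/-- `τ_i(w) = t_{w(i)}`. -/
noncomputable def tauA (n : ℕ) (i : Fin n) : Equiv.Perm (Fin n) → Rn n := fun w => X (w i)

/-- The constant function `t_i`. -/
noncomputable def tcA (n : ℕ) (i : Fin n) : Equiv.Perm (Fin n) → Rn n := fun _ => X i



lemma prime_X_sub_X {n : ℕ} {a b : Fin n} (hab : a ≠ b) :
    Prime (X a - X b : Rn n) := by
  match n with
  | 0 => exact a.elim0
  | 1 => exact absurd (Subsingleton.elim a b) hab
  | (m+2) =>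
    set c : Fin (m+2) := Equiv.swap 0 a b with hc
    have hc0 : c ≠ 0 := by
      simp only [hc, Ne, Equiv.swap_apply_eq_iff, Equiv.swap_apply_left]
      exact hab.symm
    set π : Equiv.Perm (Fin (m+2)) := (Equiv.swap 0 a).trans (Equiv.swap 1 c) with hπ
    have hπa : π a = 0 := by
      have h1 : (0 : Fin (m+2)) ≠ 1 := Fin.zero_ne_one
      simp only [hπ, Equiv.trans_apply, Equiv.swap_apply_right]
      exact Equiv.swap_apply_of_ne_of_ne h1 hc0.symm
    have hπb : π b = 1 := by
      simp only [hπ, Equiv.trans_apply, ← hc, Equiv.swap_apply_right]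
    rw [← MulEquiv.prime_iff (renameEquiv ℤ π).toMulEquiv]
    have h1 : (renameEquiv ℤ π).toMulEquiv (X a - X b : Rn (m+2))
        = (X 0 - X 1 : Rn (m+2)) := by
      show (renameEquiv ℤ π) (X a - X b : Rn (m+2)) = _
      rw [map_sub]
      simp [renameEquiv_apply, rename_X, hπa, hπb]
    rw [h1, ← MulEquiv.prime_iff (finSuccEquiv ℤ (m+1)).toMulEquiv]
    have h2 : (finSuccEquiv ℤ (m+1)).toMulEquiv (X 0 - X 1 : Rn (m+2))
        = (Polynomial.X - Polynomial.C (X 0) : Polynomial (MvPolynomial (Fin (m+1)) ℤ)) := by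
      show (finSuccEquiv ℤ (m+1)) (X 0 - X 1 : Rn (m+2)) = _
      rw [map_sub, finSuccEquiv_X_zero, ← Fin.succ_zero_eq_one, finSuccEquiv_X_succ]
    rw [h2]
    exact Polynomial.prime_X_sub_C _

lemma not_dvd_X_sub_X {n : ℕ} {c d a b : Fin n} (hcd : c ≠ d) (hab : a ≠ b)
    (h1 : ¬(a = c ∧ b = d)) (h2 : ¬(a = d ∧ b = c)) :
    ¬ ((X c - X d : Rn n) ∣ X a - X b) := by
  intro hdvd
  classical
  set φ : Rn n →ₐ[ℤ] Rn n := aeval (fun i => if i = c then (X d : Rn n) else X i) with hφ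
  have hz : φ (X c - X d) = 0 := by
    simp [hφ, aeval_X, hcd.symm]
  have hd2 : φ (X a - X b) = 0 := by
    obtain ⟨e, he⟩ := hdvd
    rw [he, map_mul, hz, zero_mul]
  have hfa : φ (X a - X b) = X (if a = c then d else a) - X (if b = c then d else b) := by
    simp only [hφ, map_sub, aeval_X]
    split_ifs <;> rfl
  rw [hfa] at hd2
  have hne : (if a = c then d else a) ≠ (if b = c then d else b) := by
    split_ifs with ha hb hb
    · exact absurd (ha.trans hb.symm) hab
    · exact fun h => h1 ⟨ha, h.symm⟩
    · exact fun h => h2 ⟨h, hb⟩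
    · exact hab
  exact (sub_ne_zero.mpr (fun h => hne (X_injective h))) hd2


lemma prod_X_sub_dvd {n : ℕ} (a : Fin n) (l : List (Fin n)) (hnd : l.Nodup) (ha : a ∉ l)
    {y : Rn n} (hd : ∀ b ∈ l, (X a - X b : Rn n) ∣ y) :
    ((l.map fun b => (X a - X b : Rn n)).prod) ∣ y := by
  induction l generalizing y with
  | nil => simpa using one_dvd y
  | cons b t ih =>
    obtain ⟨y', hy'⟩ := hd b (List.mem_cons_self (a := b) (l := t))
    have hbt : b ∉ t := (List.nodup_cons.mp hnd).1
    have hat : a ∉ t := fun h => ha (List.mem_cons_of_mem _ h)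
    have hab : a ≠ b := fun h => ha (h ▸ List.mem_cons_self (a := b) (l := t))
    have hdt : ∀ c ∈ t, (X a - X c : Rn n) ∣ y' := by
      intro c hc
      have hac : a ≠ c := fun h => ha (h ▸ List.mem_cons_of_mem _ hc)
      have hdvd : (X a - X c : Rn n) ∣ (X a - X b) * y' := hy' ▸ hd c (List.mem_cons_of_mem _ hc)
      rcases (prime_X_sub_X hac).2.2 _ _ hdvd with h | h
      · exact absurd h (not_dvd_X_sub_X hac hab (fun ⟨_, hbc⟩ => hbt (hbc ▸ hc))
          (fun ⟨hac', _⟩ => hac hac'))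
      · exact h
    rw [List.map_cons, List.prod_cons, hy']
    exact mul_dvd_mul_left _ (ih ((List.nodup_cons.mp hnd).2) hat hdt)

lemma constF_mem {n : ℕ} (r : Rn n) :
    (fun _ : Equiv.Perm (Fin n) => r) ∈
      Subring.closure (Set.range (tauA n) ∪ Set.range (tcA n)) := by
  induction r using MvPolynomial.induction_on with
  | C a =>
    have : (fun _ : Equiv.Perm (Fin n) => (C a : Rn n))
        = ((a : ℤ) : Equiv.Perm (Fin n) → Rn n) := by
      funext w
      simp [eq_intCast (C : ℤ →+* Rn n) a]
    rw [this]
    exact intCast_mem _ a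
  | add p q hp hq =>
    have : (fun _ : Equiv.Perm (Fin n) => p + q)
        = (fun _ : Equiv.Perm (Fin n) => p) + (fun _ => q) := rfl
    rw [this]; exact add_mem hp hq
  | mul_X p i hp =>
    have : (fun _ : Equiv.Perm (Fin n) => p * X i)
        = (fun _ : Equiv.Perm (Fin n) => p) * (tcA n i) := rfl
    rw [this]
    exact mul_mem hp (Subring.subset_closure (Or.inr ⟨i, rfl⟩))

lemma closure_condA {n : ℕ} {h : Equiv.Perm (Fin n) → Rn n}
    (hh : h ∈ Subring.closure (Set.range (tauA n) ∪ Set.range (tcA n))) : condA n h := by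
  let S : Subring (Equiv.Perm (Fin n) → Rn n) :=
    { carrier := {h | condA n h}
      zero_mem' := fun w i j hij => by simp
      one_mem' := fun w i j hij => by simp
      add_mem' := by
        intro f g hf hg w i j hij
        have : (f + g) w - (f + g) (w * Equiv.swap i j)
            = (f w - f (w * Equiv.swap i j)) + (g w - g (w * Equiv.swap i j)) := by
          simp [Pi.add_apply]; ring
        rw [this]; exact dvd_add (hf w i j hij) (hg w i j hij)
      neg_mem' := by
        intro f hf w i j hij
        have : (-f) w - (-f) (w * Equiv.swap i j)
            = -(f w - f (w * Equiv.swap i j)) := by simp [Pi.neg_apply]; ring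
        rw [this]; exact dvd_neg.mpr (hf w i j hij)
      mul_mem' := by
        intro f g hf hg w i j hij
        have : (f * g) w - (f * g) (w * Equiv.swap i j)
            = f w * (g w - g (w * Equiv.swap i j))
              + (f w - f (w * Equiv.swap i j)) * g (w * Equiv.swap i j) := by
          simp [Pi.mul_apply]; ring
        rw [this]
        exact dvd_add (Dvd.dvd.mul_left (hg w i j hij) _) (Dvd.dvd.mul_right (hf w i j hij) _) }
  have hgen : Set.range (tauA n) ∪ Set.range (tcA n) ⊆ S.carrier := by
    rintro x (⟨i, rfl⟩ | ⟨i, rfl⟩)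
    · intro w a b hab
      simp only [tauA]
      rcases eq_or_ne i a with rfl | hia
      · rw [Equiv.Perm.mul_apply, Equiv.swap_apply_left]
      · rcases eq_or_ne i b with rfl | hib
        · rw [Equiv.Perm.mul_apply, Equiv.swap_apply_right]
          exact ⟨-1, by ring⟩
        · rw [Equiv.Perm.mul_apply, Equiv.swap_apply_of_ne_of_ne hia hib, sub_self]
          exact dvd_zero _
    · intro w a b hab
      simp [tcA]
  exact Subring.closure_le.mpr hgen hh


def GKMP (n : ℕ) (P : Finset (Fin n)) (h : Equiv.Perm (Fin n) → Rn n) : Prop :=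
  ∀ w : Equiv.Perm (Fin n), ∀ i ∈ P, ∀ j ∈ P, i ≠ j →
    (X (w i) - X (w j) : Rn n) ∣ h w - h (w * Equiv.swap i j)

lemma GKMP_sub {n : ℕ} {P : Finset (Fin n)} {h u : Equiv.Perm (Fin n) → Rn n}
    (hh : GKMP n P h) (hu : GKMP n P u) : GKMP n P (h - u) := by
  intro w i hi j hj hij
  have : (h - u) w - (h - u) (w * Equiv.swap i j)
      = (h w - h (w * Equiv.swap i j)) - (u w - u (w * Equiv.swap i j)) := by
    simp only [Pi.sub_apply]; ring
  rw [this]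
  exact dvd_sub (hh w i hi j hj hij) (hu w i hi j hj hij)

lemma condA_GKMP {n : ℕ} {P : Finset (Fin n)} {h : Equiv.Perm (Fin n) → Rn n}
    (hc : condA n h) : GKMP n P h := fun w i _ j _ hij => hc w i j hij

theorem mainT (n : ℕ) (P : Finset (Fin n)) :
    ∀ h : Equiv.Perm (Fin n) → Rn n, GKMP n P h → ∀ w₀ : Equiv.Perm (Fin n),
      ∃ q ∈ Subring.closure (Set.range (tauA n) ∪ Set.range (tcA n)),
        ∀ w : Equiv.Perm (Fin n), (∀ i, i ∉ P → w i = w₀ i) → h w = q w := by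
  classical
  induction P using Finset.induction_on with
  | empty =>
    intro h _ w₀
    refine ⟨fun _ => h w₀, constF_mem _, fun w hw => ?_⟩
    have : w = w₀ := Equiv.ext fun i => hw i (Finset.notMem_empty i)
    rw [this]
  | @insert p₀ P' hp₀ IH =>
    intro h hh w₀
    have inner : ∀ (todo done : List (Fin n)) (h : Equiv.Perm (Fin n) → Rn n),
        (done ++ todo).Nodup →
        (∀ b ∈ done ++ todo, b ∈ (insert p₀ P').image w₀) →
        GKMP n (insert p₀ P') h →
        (∀ w : Equiv.Perm (Fin n), (∀ i, i ∉ insert p₀ P' → w i = w₀ i) →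
          w p₀ ∈ done → h w = 0) →
        (∀ w : Equiv.Perm (Fin n), (∀ i, i ∉ insert p₀ P' → w i = w₀ i) →
          w p₀ ∈ done ++ todo) →
        ∃ q ∈ Subring.closure (Set.range (tauA n) ∪ Set.range (tcA n)),
          ∀ w : Equiv.Perm (Fin n), (∀ i, i ∉ insert p₀ P' → w i = w₀ i) → h w = q w := by
      intro todo
      induction todo with
      | nil =>
        intro done h hnd hmem hGKM hvanish hcover
        refine ⟨0, zero_mem _, fun w hw => ?_⟩
        have := hvanish w hw (by simpa using hcover w hw)
        simpa using this
      | cons a rest ih =>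
        intro done h hnd hmem hGKM hvanish hcover
        -- basic nodup facts
        obtain ⟨hnd1, hnd2, hdisj⟩ := List.nodup_append'.mp hnd
        have hadone : a ∉ done := fun hd => hdisj hd (List.mem_cons_self (a := a) (l := rest))
        -- the representative wa of the fiber w p₀ = a
        obtain ⟨pa, hpa, hwpa⟩ := Finset.mem_image.mp
          (hmem a (by simp))
        set wa : Equiv.Perm (Fin n) := w₀ * Equiv.swap p₀ pa with hwa
        have hwap0 : wa p₀ = a := by
          rw [hwa, Equiv.Perm.mul_apply, Equiv.swap_apply_left, hwpa]
        have hwai : ∀ i, i ∉ insert p₀ P' → wa i = w₀ i := by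
          intro i hi
          have h1 : i ≠ p₀ := fun e => hi (e ▸ Finset.mem_insert_self p₀ P')
          have h2 : i ≠ pa := fun e => hi (e ▸ hpa)
          rw [hwa, Equiv.Perm.mul_apply, Equiv.swap_apply_of_ne_of_ne h1 h2]
        have hCA_to : ∀ w : Equiv.Perm (Fin n), (∀ i, i ∉ P' → w i = wa i) →
            ((∀ i, i ∉ insert p₀ P' → w i = w₀ i) ∧ w p₀ = a) := by
          intro w hcw
          constructor
          · intro i hi
            have hi' : i ∉ P' := fun e => hi (Finset.mem_insert_of_mem e)
            rw [hcw i hi', hwai i hi]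
          · rw [hcw p₀ hp₀, hwap0]
        have hCA_of : ∀ w : Equiv.Perm (Fin n), (∀ i, i ∉ insert p₀ P' → w i = w₀ i) →
            w p₀ = a → (∀ i, i ∉ P' → w i = wa i) := by
          intro w hcw hwp i hi
          rcases eq_or_ne i p₀ with rfl | hip
          · rw [hwp, hwap0]
          · have hi' : i ∉ insert p₀ P' := by
              simp only [Finset.mem_insert]
              push_neg
              exact ⟨hip, hi⟩
            rw [hcw i hi', hwai i hi']
        -- divisibility on the fiber
        set D : Rn n := (done.map fun b => (X a - X b : Rn n)).prod with hD
        have spec : ∀ w : Equiv.Perm (Fin n), (∀ i, i ∉ P' → w i = wa i) → D ∣ h w := by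
          intro w hcw
          obtain ⟨hcoset, hwp⟩ := hCA_to w hcw
          refine prod_X_sub_dvd a done hnd1 hadone ?_
          intro b hb
          obtain ⟨pb, hpb, hwpb⟩ := Finset.mem_image.mp
            (hmem b (List.mem_append_left _ hb))
          have hba : b ≠ a := fun e => hadone (e ▸ hb)
          set j' : Fin n := w.symm b with hj'def
          have hwj' : w j' = b := w.apply_symm_apply b
          have hj'mem : j' ∈ insert p₀ P' := by
            by_contra hj'
            have : w₀ j' = b := by rw [← hcoset j' hj', hwj']
            have : j' = pb := w₀.injective (by rw [this, hwpb])
            exact hj' (this ▸ hpb)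
          have hj'p : p₀ ≠ j' := by
            intro e
            apply hba
            rw [← hwj', ← e, hwp]
          have hedge := hGKM w p₀ (Finset.mem_insert_self p₀ P') j' hj'mem hj'p
          have hzero : h (w * Equiv.swap p₀ j') = 0 := by
            apply hvanish
            · intro i hi
              have h1 : i ≠ p₀ := fun e => hi (e ▸ Finset.mem_insert_self p₀ P')
              have h2 : i ≠ j' := fun e => hi (e ▸ hj'mem)
              rw [Equiv.Perm.mul_apply, Equiv.swap_apply_of_ne_of_ne h1 h2]
              exact hcoset i hi
            · rw [Equiv.Perm.mul_apply, Equiv.swap_apply_left, hwj']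
              exact hb
          rw [hzero, sub_zero, hwp, hwj'] at hedge
          exact hedge
        -- the quotient function g
        set g : Equiv.Perm (Fin n) → Rn n :=
          fun w => if hc : (∀ i, i ∉ P' → w i = wa i) then (spec w hc).choose else 0 with hg
        have hgval : ∀ w (hc : ∀ i, i ∉ P' → w i = wa i), h w = D * g w := by
          intro w hc
          have := (spec w hc).choose_spec
          rw [hg]
          simp only [dif_pos hc]
          exact this
        -- coset stability under swaps in P'
        have hCA_swap : ∀ (w : Equiv.Perm (Fin n)) (i j : Fin n), i ∈ P' → j ∈ P' →
            (∀ k, k ∉ P' → w k = wa k) → (∀ k, k ∉ P' → (w * Equiv.swap i j) k = wa k) := by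
          intro w i j hi hj hcw k hk
          have h1 : k ≠ i := fun e => hk (e ▸ hi)
          have h2 : k ≠ j := fun e => hk (e ▸ hj)
          rw [Equiv.Perm.mul_apply, Equiv.swap_apply_of_ne_of_ne h1 h2]
          exact hcw k hk
        have hgGKM : GKMP n P' g := by
          intro w i hi j hj hij
          by_cases hc : ∀ k, k ∉ P' → w k = wa k
          · have hc' : ∀ k, k ∉ P' → (w * Equiv.swap i j) k = wa k := hCA_swap w i j hi hj hc
            have e1 := hgval w hc
            have e2 := hgval (w * Equiv.swap i j) hc'
            have hdvd := hGKM w i (Finset.mem_insert_of_mem hi) j (Finset.mem_insert_of_mem hj) hij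
            rw [e1, e2, ← mul_sub] at hdvd
            have hwij : w i ≠ w j := fun e => hij (w.injective e)
            have hwp : w p₀ = a := (hCA_to w hc).2
            have hip : i ≠ p₀ := fun e => hp₀ (e ▸ hi)
            have hjp : j ≠ p₀ := fun e => hp₀ (e ▸ hj)
            have hwia : a ≠ w i := by
              intro e
              have : w i = w p₀ := by rw [hwp, ← e]
              exact hip (w.injective this)
            have hwja : a ≠ w j := by
              intro e
              have : w j = w p₀ := by rw [hwp, ← e]
              exact hjp (w.injective this)
            have hprime := prime_X_sub_X (n := n) hwij
            have hnotD : ¬ ((X (w i) - X (w j) : Rn n) ∣ D) := by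
              intro hdd
              rw [hD] at hdd
              obtain ⟨x, hx, hdx⟩ := (hprime.dvd_prod_iff).mp hdd
              obtain ⟨b, hb, rfl⟩ := List.mem_map.mp hx
              have hba : a ≠ b := fun e => hadone (e ▸ hb)
              exact not_dvd_X_sub_X hwij hba (fun ⟨e, _⟩ => hwia e) (fun ⟨e, _⟩ => hwja e) hdx
            exact (hprime.dvd_or_dvd hdvd).resolve_left hnotD
          · have hc' : ¬ ∀ k, k ∉ P' → (w * Equiv.swap i j) k = wa k := by
              intro hcc
              apply hc
              have := hCA_swap (w * Equiv.swap i j) i j hi hj hcc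
              intro k hk
              have hk2 := this k hk
              rwa [mul_assoc, Equiv.swap_mul_self, mul_one] at hk2
            rw [hg]
            simp only [dif_neg hc, dif_neg hc', sub_zero]
            exact dvd_zero _
        -- apply outer induction hypothesis to g on the coset of wa
        obtain ⟨qa, hqamem, hqa⟩ := IH g hgGKM wa
        -- the "base" class f
        set f : Equiv.Perm (Fin n) → Rn n := (done.map fun b => tauA n p₀ - tcA n b).prod with hf
        have hfmem : f ∈ Subring.closure (Set.range (tauA n) ∪ Set.range (tcA n)) := by
          rw [hf]
          apply list_prod_mem
          intro x hx
          obtain ⟨b, hb, rfl⟩ := List.mem_map.mp hx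
          exact sub_mem (Subring.subset_closure (Or.inl ⟨p₀, rfl⟩))
            (Subring.subset_closure (Or.inr ⟨b, rfl⟩))
        have hfeval : ∀ w : Equiv.Perm (Fin n),
            f w = (done.map fun b => (X (w p₀) - X b : Rn n)).prod := by
          intro w
          rw [hf, Pi.list_prod_apply, List.map_map]
          rfl
        -- the corrected class h'
        set h' : Equiv.Perm (Fin n) → Rn n := h - f * qa with hh'
        have hGKM' : GKMP n (insert p₀ P') h' :=
          GKMP_sub hGKM (condA_GKMP (closure_condA (mul_mem hfmem hqamem)))
        have hvanish' : ∀ w : Equiv.Perm (Fin n), (∀ i, i ∉ insert p₀ P' → w i = w₀ i) →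
            w p₀ ∈ a :: done → h' w = 0 := by
          intro w hw hmemw
          rcases List.mem_cons.mp hmemw with heq | hbd
          · have hca := hCA_of w hw heq
            have hfw : f w = D := by rw [hfeval w, heq, hD]
            have : h w = D * qa w := by rw [hgval w hca, hqa w hca]
            rw [hh']
            simp only [Pi.sub_apply, Pi.mul_apply]
            rw [this, hfw]
            ring
          · have hzero : h w = 0 := hvanish w hw hbd
            have hfw : f w = 0 := by
              rw [hfeval w]
              exact List.prod_eq_zero (List.mem_map.mpr ⟨w p₀, hbd, sub_self _⟩)
            rw [hh']
            simp only [Pi.sub_apply, Pi.mul_apply]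
            rw [hzero, hfw]
            ring
        have hperm : (a :: (done ++ rest)).Perm (done ++ a :: rest) := List.perm_middle.symm
        have hnd' : ((a :: done) ++ rest).Nodup := by
          rw [List.cons_append]
          exact hperm.nodup_iff.mpr hnd
        have hmem' : ∀ b ∈ (a :: done) ++ rest, b ∈ (insert p₀ P').image w₀ := by
          intro b hb
          apply hmem
          rw [List.cons_append] at hb
          exact hperm.mem_iff.mp hb
        have hcover' : ∀ w : Equiv.Perm (Fin n), (∀ i, i ∉ insert p₀ P' → w i = w₀ i) →
            w p₀ ∈ (a :: done) ++ rest := by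
          intro w hw
          rw [List.cons_append]
          exact hperm.mem_iff.mpr (hcover w hw)
        obtain ⟨q', hq'mem, hq'⟩ := ih (a :: done) h' hnd' hmem' hGKM' hvanish' hcover'
        refine ⟨q' + f * qa, add_mem hq'mem (mul_mem hfmem hqamem), fun w hw => ?_⟩
        have := hq' w hw
        rw [hh'] at this
        simp only [Pi.sub_apply, Pi.mul_apply, Pi.add_apply] at this ⊢
        linear_combination this
    -- conclude the insert case from `inner`
    have hcov0 : ∀ w : Equiv.Perm (Fin n), (∀ i, i ∉ insert p₀ P' → w i = w₀ i) →
        w p₀ ∈ ([] : List (Fin n)) ++ ((insert p₀ P').image w₀).toList := by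
      intro w hw
      rw [List.nil_append, Finset.mem_toList, Finset.mem_image]
      refine ⟨w₀.symm (w p₀), ?_, w₀.apply_symm_apply _⟩
      by_contra hns
      have h1 : w (w₀.symm (w p₀)) = w₀ (w₀.symm (w p₀)) := hw _ hns
      rw [w₀.apply_symm_apply] at h1
      have heq : w₀.symm (w p₀) = p₀ := w.injective h1
      rw [heq] at hns
      exact hns (Finset.mem_insert_self p₀ P')
    exact inner ((insert p₀ P').image w₀).toList [] h
      (by simpa using Finset.nodup_toList _)
      (by intro b hb; rw [List.nil_append, Finset.mem_toList] at hb; exact hb)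
      hh (fun w _ hmem => absurd hmem List.not_mem_nil) hcov0


/-- `H^*_T(𝒜_n)` is generated as a ring by `τ_1,…,τ_n, t_1,…,t_n`. -/
theorem graphCohomology_typeA_generated (n : ℕ) (hn : 1 ≤ n) :
    {h : Equiv.Perm (Fin n) → Rn n | condA n h} =
      (Subring.closure (Set.range (tauA n) ∪ Set.range (tcA n)) :
        Set (Equiv.Perm (Fin n) → Rn n)) := by
  ext h
  simp only [Set.mem_setOf_eq, SetLike.mem_coe]
  constructor
  · intro hc
    obtain ⟨q, hqmem, hq⟩ := mainT n Finset.univ h (condA_GKMP hc) 1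
    have : h = q := funext fun w => hq w (fun i hi => absurd (Finset.mem_univ i) hi)
    rw [this]
    exact hqmem
  · exact closure_condA
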